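/- Let P be a partial order on a finite nonempty set V, L a linear extension of P containing no alternating anticycle, and S the set of minimal elements of P. Then there exists a minimal element a ∈ S such that for every b ∈ V \ S, a ≺_L b implies a ≺_P b. -/
import Mathlib


variable {V : Type*}

/-- A strict partial order: irreflexive and transitive. -/
def IsPartialOrd (P : V → V → Prop) : Prop := Irreflexive P ∧ Transitive P

/-- A strict linear order: irreflexive, transitive, and total. -/
def IsLinearOrd (L : V → V → Prop) : Prop :=
  Irreflexive L ∧ Transitive L ∧ ∀ u v : V, u ≠ v → L u v ∨ L v u

/-- `L` is a linear extension of `P`. -/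
def IsLinExt (P L : V → V → Prop) : Prop :=
  IsLinearOrd L ∧ ∀ u v : V, P u v → L u v

/-- Four distinct elements `a0, b0, a1, b1` form a suborder `2+2` of `P`:
their only `P`-relations are `a0 ≺ b0` and `a1 ≺ b1`. -/
def IsTwoPlusTwo (P : V → V → Prop) (a0 b0 a1 b1 : V) : Prop :=
  ([a0, b0, a1, b1] : List V).Nodup ∧ P a0 b0 ∧ P a1 b1 ∧
  ¬ P b0 a0 ∧ ¬ P b1 a1 ∧
  ¬ P a0 a1 ∧ ¬ P a1 a0 ∧ ¬ P a0 b1 ∧ ¬ P b1 a0 ∧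
  ¬ P a1 b0 ∧ ¬ P b0 a1 ∧ ¬ P b0 b1 ∧ ¬ P b1 b0

/-- The linear extension `L` of `P` fulfills the `2+2` rule. -/
def TwoPlusTwoRule (P L : V → V → Prop) : Prop :=
  ∀ a0 b0 a1 b1 : V, IsTwoPlusTwo P a0 b0 a1 b1 → L b0 a1 ∨ L b1 a0

/-- Four distinct elements form an alternating 4-anticycle of `L` w.r.t. `P`. -/
def IsAlt4Anticycle (P L : V → V → Prop) (a0 b0 a1 b1 : V) : Prop :=
  ([a0, b0, a1, b1] : List V).Nodup ∧ P a0 b0 ∧ P a1 b1 ∧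
  L a1 b0 ∧ ¬ P a1 b0 ∧ L a0 b1 ∧ ¬ P a0 b1

/-- An alternating `2k`-anticycle of `L` w.r.t. `P`, given by `a, b : ZMod k → V`. -/
def IsAltAnticycle (P L : V → V → Prop) (k : ℕ) (a b : ZMod k → V) : Prop :=
  Function.Injective a ∧ Function.Injective b ∧ (∀ i j : ZMod k, a i ≠ b j) ∧
  ∀ i : ZMod k, P (a i) (b i) ∧ L (a (i + 1)) (b i) ∧ ¬ P (a (i + 1)) (b i)

/-- `P` is a linear-interval order: the intersection of a linear order and an
interval order (given by an interval representation `l`, `r`). -/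
def IsLinearIntervalOrder (P : V → V → Prop) : Prop :=
  ∃ (L : V → V → Prop) (l r : V → ℝ), IsLinearOrd L ∧ (∀ v, l v ≤ r v) ∧
    ∀ u v : V, P u v ↔ L u v ∧ r u < l v

theorem stmt3 {V : Type*} [Fintype V] [Nonempty V] (P L : V → V → Prop)
    (hP : IsPartialOrd P) (hL : IsLinExt P L)
    (hno : ∀ k : ℕ, 2 ≤ k → ∀ a b : ZMod k → V, ¬ IsAltAnticycle P L k a b) :
    ∃ a : V, (∀ b : V, ¬ P b a) ∧
      ∀ b : V, ¬ (∀ c : V, ¬ P c b) → L a b → P a b := by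
  classical
  by_contra hcon
  push_neg at hcon
  have hwf : WellFounded P := by
    haveI : IsIrrefl V P := ⟨hP.1⟩
    haveI : IsTrans V P := ⟨fun a b c h1 h2 => hP.2 h1 h2⟩
    exact Finite.wellFounded_of_trans_of_irrefl P
  have hMex : ∀ b : V, (∃ c, P c b) → ∃ m, P m b ∧ ∀ d, ¬ P d m := by
    intro b hb
    obtain ⟨m, hm, hminm⟩ := hwf.has_min {c | P c b} hb
    exact ⟨m, hm, fun d hd => hminm d (hP.2 hd hm) hd⟩
  choose! Mf hMf1 hMf2 using hMex
  choose! Bf hBf1 hBf2 hBf3 using hcon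
  set G : V → V := fun v => Mf (Bf v) with hG
  obtain ⟨v0, -, hv0'⟩ := hwf.has_min Set.univ ⟨Classical.arbitrary V, trivial⟩
  have hv0 : ∀ c, ¬ P c v0 := fun c hc => hv0' c trivial hc
  set x : ℕ → V := fun n => G^[n] v0 with hx
  have hxsucc : ∀ n, x (n + 1) = G (x n) := fun n => Function.iterate_succ_apply' _ _ _
  have hxmin : ∀ n, ∀ c, ¬ P c (x n) := by
    intro n
    induction n with
    | zero => exact hv0
    | succ n ih =>
      rw [hxsucc]
      exact hMf2 (Bf (x n)) (hBf1 (x n) ih)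
  -- repetition
  have hrep : ∃ n, ∃ m, m < n ∧ x m = x n := by
    obtain ⟨s, t, hne, heq⟩ := Finite.exists_ne_map_eq_of_infinite x
    rcases hne.lt_or_gt with h | h
    · exact ⟨t, s, h, heq⟩
    · exact ⟨s, t, h, heq.symm⟩
  set n1 := Nat.find hrep with hn1
  obtain ⟨n0, hn0lt, heq0⟩ := Nat.find_spec hrep
  have hinjw : ∀ s t, s < t → t < n1 → x s ≠ x t := by
    intro s t hst htn heq
    exact Nat.find_min hrep htn ⟨s, hst, heq⟩
  set p := n1 - n0 with hp
  have hn1eq : n1 = n0 + p := by omega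
  have hper : ∀ n, n0 ≤ n → x (n + p) = x n := by
    intro n hn
    induction n, hn using Nat.le_induction with
    | base => rw [← hn1eq]; exact heq0.symm
    | succ n hn ih =>
      have : n + 1 + p = (n + p) + 1 := by omega
      rw [this, hxsucc, ih, ← hxsucc]
  have hp2 : 2 ≤ p := by
    rcases Nat.lt_or_ge p 2 with h | h
    · exfalso
      have hp1 : p = 1 := by omega
      have hx1 : x (n0 + 1) = x n0 := by
        have := hper n0 le_rfl; rwa [hp1] at this
      rw [hxsucc] at hx1
      have hx1' : Mf (Bf (x n0)) = x n0 := hx1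
      have h1 := hMf1 (Bf (x n0)) (hBf1 (x n0) (hxmin n0))
      rw [hx1'] at h1
      exact hBf3 (x n0) (hxmin n0) h1
    · exact h
  haveI : NeZero p := ⟨by omega⟩
  set a : ZMod p → V := fun i => x (n0 + (p - 1 - i.val)) with ha
  set b : ZMod p → V := fun i => Bf (a (i + 1)) with hb
  have hval1 : (1 : ZMod p).val = 1 := by
    haveI : Fact (1 < p) := ⟨by omega⟩
    exact ZMod.val_one p
  have hvalinj : ∀ i j : ZMod p, i.val = j.val → i = j := by
    intro i j h
    rw [← ZMod.natCast_rightInverse i, ← ZMod.natCast_rightInverse j, h]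
  have hGa : ∀ i : ZMod p, G (a (i + 1)) = a i := by
    intro i
    have hiv := ZMod.val_lt i
    rcases Nat.lt_or_ge i.val (p - 1) with hlt | hge
    · have hv : (i + 1).val = i.val + 1 := by
        rw [ZMod.val_add_of_lt (by omega), hval1]
      show G (x (n0 + (p - 1 - (i + 1).val))) = x (n0 + (p - 1 - i.val))
      rw [hv, ← hxsucc]
      congr 1
      omega
    · have hiv' : i.val = p - 1 := by omega
      have hi1 : i + 1 = 0 := by
        have : i = ((p - 1 : ℕ) : ZMod p) := by
          rw [← hiv']; exact (ZMod.natCast_rightInverse i).symm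
        rw [this, show (1 : ZMod p) = ((1 : ℕ) : ZMod p) from (Nat.cast_one).symm,
          ← Nat.cast_add, show p - 1 + 1 = p from by omega, ZMod.natCast_self]
      show G (x (n0 + (p - 1 - (i + 1).val))) = x (n0 + (p - 1 - i.val))
      rw [hi1, hiv']
      have e1 : (0 : ZMod p).val = 0 := ZMod.val_zero
      rw [e1, ← hxsucc]
      have e2 : n0 + (p - 1 - 0) + 1 = n0 + p := by omega
      have e3 : n0 + (p - 1 - (p - 1)) = n0 := by omega
      rw [e2, e3]
      exact hper n0 le_rfl
  have hamin : ∀ i : ZMod p, ∀ c, ¬ P c (a i) := fun i => hxmin _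
  have hainj : Function.Injective a := by
    intro i j h
    apply hvalinj
    by_contra hne
    have hiv := ZMod.val_lt i
    have hjv := ZMod.val_lt j
    rcases Nat.lt_or_ge i.val j.val with hlt | hge
    · exact hinjw (n0 + (p - 1 - j.val)) (n0 + (p - 1 - i.val)) (by omega) (by omega) h.symm
    · exact hinjw (n0 + (p - 1 - i.val)) (n0 + (p - 1 - j.val)) (by omega) (by omega) h
  apply hno p hp2 a b
  refine ⟨hainj, ?_, ?_, ?_⟩
  · intro i j h
    have : G (a (i + 1)) = G (a (j + 1)) := by
      show Mf (Bf (a (i + 1))) = Mf (Bf (a (j + 1)))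
      rw [show Bf (a (i + 1)) = Bf (a (j + 1)) from h]
    rw [hGa, hGa] at this
    exact hainj this
  · intro i j h
    obtain ⟨c, hc⟩ := hBf1 (a (j + 1)) (hamin (j + 1))
    have hc' : P c (b j) := hc
    rw [← h] at hc'
    exact hamin i c hc'
  · intro i
    refine ⟨?_, hBf2 _ (hamin (i + 1)), hBf3 _ (hamin (i + 1))⟩
    have := hMf1 (Bf (a (i + 1))) (hBf1 _ (hamin (i + 1)))
    rwa [show Mf (Bf (a (i + 1))) = a i from hGa i] at this
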